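/- Let G be a k-uniform hypergraph with vertex partition V = C_1 ∪ C_2 ∪ D, |C_1| = |C_2| = t, in which every edge has at most one vertex in C_1 ∪ C_2, and for every (k-1)-subset S of D, the neighbourhood Γ(S) ∩ (C_1 ∪ C_2) is either C_1, or C_2, or satisfies |Γ(S) ∩ C_1| = |Γ(S) ∩ C_2|. Let H be obtained from G by, for each (k-1)-subset S of D with Γ(S) ∩ (C_1 ∪ C_2) ∈ {C_1, C_2}, switching the adjacency between S and every vertex of C_1 ∪ C_2. Then 𝒜_H = Q 𝒜_G Qᵀ where Q = [[I_t - (1/t)J_t, (1/t)J_t, 0],[(1/t)J_t, I_t - (1/t)J_t, 0],[0,0,I_{n-2t}]] and (Q𝒜Qᵀ)_{i_1⋯i_k} = Σ_{j_1,…,j_k} a_{j_1⋯j_k} ∏_s q_{i_s j_s}. -/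

import Mathlib

open Matrix Finset

/-- E-WQH switching: the adjacency tensor of the switched hypergraph H equals the
conjugation of the adjacency tensor of G by the orthogonal block matrix Q. -/
theorem EWQH_switching (k t d : ℕ) (hk : 2 ≤ k) (ht : 1 ≤ t)
    (G H : Finset (Finset ((Fin t ⊕ Fin t) ⊕ Fin d)))
    (C₁ C₂ D : Finset ((Fin t ⊕ Fin t) ⊕ Fin d))
    (hC₁ : C₁ = Finset.univ.image
      (fun a : Fin t => (Sum.inl (Sum.inl a) : (Fin t ⊕ Fin t) ⊕ Fin d)))
    (hC₂ : C₂ = Finset.univ.image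
      (fun a : Fin t => (Sum.inl (Sum.inr a) : (Fin t ⊕ Fin t) ⊕ Fin d)))
    (hD : D = Finset.univ.image
      (fun b : Fin d => (Sum.inr b : (Fin t ⊕ Fin t) ⊕ Fin d)))
    -- G is k-uniform
    (hGk : ∀ e ∈ G, e.card = k)
    -- every edge has at most one vertex in C₁ ∪ C₂
    (hG1 : ∀ e ∈ G, (e ∩ (C₁ ∪ C₂)).card ≤ 1)
    -- N S is the neighbourhood Γ(S) in G
    (N : Finset ((Fin t ⊕ Fin t) ⊕ Fin d) → Finset ((Fin t ⊕ Fin t) ⊕ Fin d))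
    (hN : ∀ S, N S = Finset.univ.filter (fun u => u ∉ S ∧ insert u S ∈ G))
    -- neighbourhood condition for (k-1)-subsets of D
    (hG2 : ∀ S ⊆ D, S.card = k - 1 →
      (N S ∩ (C₁ ∪ C₂) = C₁ ∨ N S ∩ (C₁ ∪ C₂) = C₂ ∨
        (N S ∩ C₁).card = (N S ∩ C₂).card))
    -- Sw e: the k-set e is one whose adjacency is switched
    (Sw : Finset ((Fin t ⊕ Fin t) ⊕ Fin d) → Prop)
    (hSw : ∀ e, Sw e ↔ ∃ v ∈ C₁ ∪ C₂, ∃ S ⊆ D, S.card = k - 1 ∧ e = insert v S ∧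
      (N S ∩ (C₁ ∪ C₂) = C₁ ∨ N S ∩ (C₁ ∪ C₂) = C₂))
    -- H is obtained from G by the switching
    (hH : ∀ e, e ∈ H ↔ ((e ∈ G ∧ ¬ Sw e) ∨ (e ∉ G ∧ Sw e)))
    (J : Matrix (Fin t) (Fin t) ℝ) (hJ : ∀ a b, J a b = 1)
    (Q : Matrix ((Fin t ⊕ Fin t) ⊕ Fin d) ((Fin t ⊕ Fin t) ⊕ Fin d) ℝ)
    (hQ : Q = fromBlocks
      (fromBlocks (1 - (t : ℝ)⁻¹ • J) ((t : ℝ)⁻¹ • J) ((t : ℝ)⁻¹ • J) (1 - (t : ℝ)⁻¹ • J))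
      0 0 1)
    -- adjacency tensors of G and H
    (AG AH : (Fin k → (Fin t ⊕ Fin t) ⊕ Fin d) → ℝ)
    (hAG : ∀ i, AG i = if Function.Injective i ∧ Finset.image i Finset.univ ∈ G
      then (1 : ℝ) / (Nat.factorial (k - 1)) else 0)
    (hAH : ∀ i, AH i = if Function.Injective i ∧ Finset.image i Finset.univ ∈ H
      then (1 : ℝ) / (Nat.factorial (k - 1)) else 0) :
    ∀ i : Fin k → (Fin t ⊕ Fin t) ⊕ Fin d,
      AH i = ∑ j : Fin k → (Fin t ⊕ Fin t) ⊕ Fin d, AG j * ∏ s, Q (i s) (j s) := by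
  classical
  intro i
  have htR : (t : ℝ) ≠ 0 := Nat.cast_ne_zero.mpr (by omega)
  -- membership characterizations
  have hC1mem : ∀ v : (Fin t ⊕ Fin t) ⊕ Fin d, v ∈ C₁ ↔ ∃ a, v = Sum.inl (Sum.inl a) := by
    intro v; simp [hC₁, eq_comm]
  have hC2mem : ∀ v : (Fin t ⊕ Fin t) ⊕ Fin d, v ∈ C₂ ↔ ∃ a, v = Sum.inl (Sum.inr a) := by
    intro v; simp [hC₂, eq_comm]
  have hDmem : ∀ v : (Fin t ⊕ Fin t) ⊕ Fin d, v ∈ D ↔ ∃ b, v = Sum.inr b := by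
    intro v; simp [hD, eq_comm]
  have hCC : ∀ y : Fin t ⊕ Fin t, Sum.inl y ∈ C₁ ∪ C₂ := by
    intro y; rw [Finset.mem_union]; rcases y with a | a
    · exact Or.inl ((hC1mem _).2 ⟨a, rfl⟩)
    · exact Or.inr ((hC2mem _).2 ⟨a, rfl⟩)
  have hCunion : ∀ v : (Fin t ⊕ Fin t) ⊕ Fin d, v ∈ C₁ ∪ C₂ ↔ ∃ y, v = Sum.inl y := by
    intro v; constructor
    · intro hv; rcases Finset.mem_union.1 hv with h | h
      · obtain ⟨a, rfl⟩ := (hC1mem _).1 h; exact ⟨_, rfl⟩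
      · obtain ⟨a, rfl⟩ := (hC2mem _).1 h; exact ⟨_, rfl⟩
    · rintro ⟨y, rfl⟩; exact hCC y
  -- Q block values
  have hQCD : ∀ (x : Fin t ⊕ Fin t) (b : Fin d), Q (Sum.inl x) (Sum.inr b) = 0 := by
    intro x b; rw [hQ]; simp [Matrix.fromBlocks]
  have hQDC : ∀ (b : Fin d) (x : Fin t ⊕ Fin t), Q (Sum.inr b) (Sum.inl x) = 0 := by
    intro b x; rw [hQ]; simp [Matrix.fromBlocks]
  have hQDD : ∀ b b' : Fin d, Q (Sum.inr b) (Sum.inr b') = if b = b' then 1 else 0 := by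
    intro b b'; rw [hQ]; simp [Matrix.fromBlocks, Matrix.one_apply]
  have hQ11 : ∀ a a' : Fin t, Q (Sum.inl (Sum.inl a)) (Sum.inl (Sum.inl a')) =
      (if a = a' then (1:ℝ) else 0) - (t:ℝ)⁻¹ := by
    intro a a'; rw [hQ]
    simp [Matrix.fromBlocks, Matrix.sub_apply, Matrix.one_apply, Matrix.smul_apply, hJ]
  have hQ12 : ∀ a a' : Fin t, Q (Sum.inl (Sum.inl a)) (Sum.inl (Sum.inr a')) = (t:ℝ)⁻¹ := by
    intro a a'; rw [hQ]
    simp [Matrix.fromBlocks, Matrix.smul_apply, hJ]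
  have hQ21 : ∀ a a' : Fin t, Q (Sum.inl (Sum.inr a)) (Sum.inl (Sum.inl a')) = (t:ℝ)⁻¹ := by
    intro a a'; rw [hQ]
    simp [Matrix.fromBlocks, Matrix.smul_apply, hJ]
  have hQ22 : ∀ a a' : Fin t, Q (Sum.inl (Sum.inr a)) (Sum.inl (Sum.inr a')) =
      (if a = a' then (1:ℝ) else 0) - (t:ℝ)⁻¹ := by
    intro a a'; rw [hQ]
    simp [Matrix.fromBlocks, Matrix.sub_apply, Matrix.one_apply, Matrix.smul_apply, hJ]
  have hQne : ∀ v w : (Fin t ⊕ Fin t) ⊕ Fin d, Q v w ≠ 0 →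
      ((∃ x y, v = Sum.inl x ∧ w = Sum.inl y) ∨ (∃ b, v = Sum.inr b ∧ w = Sum.inr b)) := by
    rintro (x | b) (y | b') h
    · exact Or.inl ⟨x, y, rfl, rfl⟩
    · exact absurd (hQCD x b') h
    · exact absurd (hQDC b y) h
    · rcases eq_or_ne b b' with rfl | hbb
      · exact Or.inr ⟨b, rfl, rfl⟩
      · exact absurd (by rw [hQDD, if_neg hbb]) h
  -- intersections with insert
  have hinterD : ∀ (y : Fin t ⊕ Fin t) (S' : Finset ((Fin t ⊕ Fin t) ⊕ Fin d)), S' ⊆ D →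
      (insert (Sum.inl y) S') ∩ D = S' := by
    intro y S' hS'
    ext v; simp only [Finset.mem_inter, Finset.mem_insert]
    constructor
    · rintro ⟨rfl | h1, h2⟩
      · obtain ⟨b, hb⟩ := (hDmem _).1 h2; exact absurd hb (by simp)
      · exact h1
    · intro h; exact ⟨Or.inr h, hS' h⟩
  have hinterCC : ∀ (y : Fin t ⊕ Fin t) (S' : Finset ((Fin t ⊕ Fin t) ⊕ Fin d)), S' ⊆ D →
      (insert (Sum.inl y) S') ∩ (C₁ ∪ C₂) = {Sum.inl y} := by
    intro y S' hS'
    ext v; simp only [Finset.mem_inter, Finset.mem_insert, Finset.mem_singleton]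
    constructor
    · rintro ⟨h1 | h1, h2⟩
      · exact h1
      · obtain ⟨b, rfl⟩ := (hDmem v).1 (hS' h1)
        obtain ⟨y', hy'⟩ := (hCunion _).1 h2
        exact absurd hy' (by simp)
    · rintro rfl; exact ⟨Or.inl rfl, hCC y⟩
  have hHedge : ∀ e ∈ H, (e ∩ (C₁ ∪ C₂)).card ≤ 1 := by
    intro e he
    rcases (hH e).1 he with ⟨heG, -⟩ | ⟨-, hsw⟩
    · exact hG1 e heG
    · obtain ⟨v, hv, S', hS', -, rfl, -⟩ := (hSw e).1 hsw
      obtain ⟨y, rfl⟩ := (hCunion v).1 hv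
      rw [hinterCC y S' hS']
      simp
  have hcard2 : ∀ e : Finset ((Fin t ⊕ Fin t) ⊕ Fin d), (e ∩ (C₁ ∪ C₂)).card ≤ 1 →
      ∀ y y' : Fin t ⊕ Fin t, y ≠ y' → Sum.inl y ∈ e → Sum.inl y' ∈ e → False := by
    intro e he y y' hne hy hy'
    have hsub : ({Sum.inl y, Sum.inl y'} : Finset ((Fin t ⊕ Fin t) ⊕ Fin d)) ⊆ e ∩ (C₁ ∪ C₂) := by
      intro v hv
      rcases Finset.mem_insert.1 hv with rfl | hv
      · exact Finset.mem_inter.2 ⟨hy, hCC y⟩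
      · rw [Finset.mem_singleton] at hv; subst hv
        exact Finset.mem_inter.2 ⟨hy', hCC y'⟩
    have h2 := Finset.card_le_card hsub
    rw [Finset.card_pair (by simpa using hne)] at h2
    omega
  -- zero-term lemmas
  have Z1 : ∀ (j : Fin k → (Fin t ⊕ Fin t) ⊕ Fin d) (s s' : Fin k), s ≠ s' →
      (∃ x, i s = Sum.inl x) → (∃ x', i s' = Sum.inl x') →
      AG j * ∏ u, Q (i u) (j u) = 0 := by
    intro j s s' hss hx hx'
    obtain ⟨x, hx⟩ := hx; obtain ⟨x', hx'⟩ := hx'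
    by_cases hj : Function.Injective j ∧ Finset.image j Finset.univ ∈ G
    · by_cases h1 : Q (i s) (j s) = 0
      · exact mul_eq_zero_of_right _ (Finset.prod_eq_zero (Finset.mem_univ s) h1)
      by_cases h2 : Q (i s') (j s') = 0
      · exact mul_eq_zero_of_right _ (Finset.prod_eq_zero (Finset.mem_univ s') h2)
      exfalso
      rcases hQne _ _ h1 with ⟨x1, y, hv, hw⟩ | ⟨b, hv, -⟩
      swap
      · rw [hx] at hv; simp at hv
      rcases hQne _ _ h2 with ⟨x2, y', hv', hw'⟩ | ⟨b, hv', -⟩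
      swap
      · rw [hx'] at hv'; simp at hv'
      have hyy : y ≠ y' := by
        intro h; apply hss; apply hj.1; rw [hw, hw', h]
      refine hcard2 _ (hG1 _ hj.2) y y' hyy ?_ ?_
      · rw [← hw]; exact Finset.mem_image_of_mem j (Finset.mem_univ s)
      · rw [← hw']; exact Finset.mem_image_of_mem j (Finset.mem_univ s')
    · rw [hAG, if_neg hj, zero_mul]
  have Z2 : ∀ (j : Fin k → (Fin t ⊕ Fin t) ⊕ Fin d) (s s' : Fin k), s ≠ s' → i s = i s' →
      AG j * ∏ u, Q (i u) (j u) = 0 := by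
    intro j s s' hss hii
    rcases h : i s with x | b
    · exact Z1 j s s' hss ⟨x, h⟩ ⟨x, by rw [← hii, h]⟩
    · by_cases h1 : Q (i s) (j s) = 0
      · exact mul_eq_zero_of_right _ (Finset.prod_eq_zero (Finset.mem_univ s) h1)
      by_cases h2 : Q (i s') (j s') = 0
      · exact mul_eq_zero_of_right _ (Finset.prod_eq_zero (Finset.mem_univ s') h2)
      rcases hQne _ _ h1 with ⟨x1, y, hv, -⟩ | ⟨b1, hv, hw⟩
      · rw [h] at hv; simp at hv
      rcases hQne _ _ h2 with ⟨x1, y, hv', -⟩ | ⟨b2, hv', hw'⟩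
      · rw [← hii, h] at hv'; simp at hv'
      have hb1 : b1 = b := Sum.inr.inj (hv.symm.trans h)
      have hb2 : b2 = b := Sum.inr.inj (hv'.symm.trans (hii ▸ h))
      have hnotinj : ¬ Function.Injective j := by
        intro hji
        exact hss (hji (by rw [hw, hw', hb1, hb2]))
      rw [hAG, if_neg (fun hc => hnotinj hc.1), zero_mul]
  by_cases hinj : Function.Injective i
  · by_cases hCex : ∃ s x, i s = Sum.inl x
    · obtain ⟨s₀, x, hx⟩ := hCex
      by_cases h2 : ∃ s', s' ≠ s₀ ∧ ∃ x', i s' = Sum.inl x'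
      · -- at least two coordinates of i lie in C₁ ∪ C₂ : both sides vanish
        obtain ⟨s', hs', x', hx'⟩ := h2
        have hne : ¬ (Function.Injective i ∧ Finset.image i Finset.univ ∈ H) := by
          rintro ⟨-, hmem⟩
          refine hcard2 _ (hHedge _ hmem) x x' ?_ ?_ ?_
          · intro hxx
            exact hs' (hinj (by rw [hx', ← hxx, ← hx])).symm
          · rw [← hx]; exact Finset.mem_image_of_mem i (Finset.mem_univ s₀)
          · rw [← hx']; exact Finset.mem_image_of_mem i (Finset.mem_univ s')
        rw [hAH, if_neg hne]
        exact (Finset.sum_eq_zero fun j _ => Z1 j s₀ s' (fun h => hs' h.symm) ⟨x, hx⟩ ⟨x', hx'⟩).symm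
      · -- exactly one coordinate (s₀) of i lies in C₁ ∪ C₂ : the main case
        push_neg at h2
        have hrest : ∀ s, s ≠ s₀ → ∃ b, i s = Sum.inr b := by
          intro s hs; rcases h : i s with y | b
          · exact absurd h (h2 s hs y)
          · exact ⟨b, rfl⟩
        set S : Finset ((Fin t ⊕ Fin t) ⊕ Fin d) := Finset.image i (Finset.univ.erase s₀)
          with hSdef
        have hSD : S ⊆ D := by
          intro v hv
          obtain ⟨s, hs, rfl⟩ := Finset.mem_image.1 hv
          obtain ⟨b, hb⟩ := hrest s (Finset.mem_erase.1 hs).1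
          rw [hb]; exact (hDmem _).2 ⟨b, rfl⟩
        have hxS : ∀ y : Fin t ⊕ Fin t, Sum.inl y ∉ S := by
          intro y hy
          obtain ⟨b, hb⟩ := (hDmem _).1 (hSD hy)
          simp at hb
        have hScard : S.card = k - 1 := by
          rw [hSdef, Finset.card_image_of_injOn (Function.Injective.injOn hinj),
            Finset.card_erase_of_mem (Finset.mem_univ _), Finset.card_univ, Fintype.card_fin]
        have himage : ∀ v : (Fin t ⊕ Fin t) ⊕ Fin d,
            Finset.image (Function.update i s₀ v) Finset.univ = insert v S := by
          intro v
          conv_lhs => rw [← Finset.insert_erase (Finset.mem_univ s₀)]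
          rw [Finset.image_insert, Function.update_self]
          congr 1
          refine Finset.image_congr ?_
          intro s hs
          exact Function.update_of_ne (Finset.mem_erase.1 hs).1 _ _
        have himage_i : Finset.image i Finset.univ = insert (Sum.inl x) S := by
          have h' := himage (Sum.inl x)
          rwa [show Function.update i s₀ (Sum.inl x) = i from funext fun s => by
            rcases eq_or_ne s s₀ with rfl | hs
            · rw [Function.update_self, hx]
            · rw [Function.update_of_ne hs]] at h'
        have hupd_inj : ∀ y : Fin t ⊕ Fin t,
            Function.Injective (Function.update i s₀ (Sum.inl y)) := by
          intro y a b hab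
          by_cases ha : a = s₀ <;> by_cases hb : b = s₀
          · rw [ha, hb]
          · rw [ha, Function.update_self, Function.update_of_ne hb] at hab
            obtain ⟨b', hb'⟩ := hrest b hb; rw [hb'] at hab; simp at hab
          · rw [hb, Function.update_of_ne ha, Function.update_self] at hab
            obtain ⟨b', hb'⟩ := hrest a ha; rw [hb'] at hab; simp at hab
          · rw [Function.update_of_ne ha, Function.update_of_ne hb] at hab
            exact hinj hab
        have hSw_iff : Sw (insert (Sum.inl x) S) ↔
            (N S ∩ (C₁ ∪ C₂) = C₁ ∨ N S ∩ (C₁ ∪ C₂) = C₂) := by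
          rw [hSw]
          constructor
          · rintro ⟨v, hv, S', hS'D, -, heq, hcond⟩
            obtain ⟨y, rfl⟩ := (hCunion v).1 hv
            have hS'S : S = S' := by
              have hh1 := hinterD x S hSD
              have hh2 := hinterD y S' hS'D
              rw [← hh1, heq, hh2]
            rwa [hS'S]
          · intro h
            exact ⟨Sum.inl x, hCC x, S, hSD, hScard, rfl, h⟩
        have hmemG : ∀ y : Fin t ⊕ Fin t, (insert (Sum.inl y) S ∈ G ↔ Sum.inl y ∈ N S) := by
          intro y
          rw [hN]
          simp only [Finset.mem_filter, Finset.mem_univ, true_and]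
          exact ⟨fun h => ⟨hxS y, h⟩, fun h => h.2⟩
        set w : ℝ := 1 / (Nat.factorial (k - 1)) with hwdef
        set f : (Fin t ⊕ Fin t) → (Fin k → (Fin t ⊕ Fin t) ⊕ Fin d) :=
          fun y => Function.update i s₀ (Sum.inl y) with hf
        have hf_inj : ∀ a b : Fin t ⊕ Fin t, f a = f b → a = b := by
          intro a b hab
          have h' := congrFun hab s₀
          simp only [hf, Function.update_self] at h'
          exact Sum.inl.inj h'
        have hz : ∀ j ∈ (Finset.univ : Finset (Fin k → (Fin t ⊕ Fin t) ⊕ Fin d)),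
            j ∉ Finset.image f Finset.univ → AG j * ∏ s, Q (i s) (j s) = 0 := by
          intro j _ hj
          by_cases hQ0 : ∃ s, Q (i s) (j s) = 0
          · obtain ⟨s, hs⟩ := hQ0
            exact mul_eq_zero_of_right _ (Finset.prod_eq_zero (Finset.mem_univ s) hs)
          · exfalso
            push_neg at hQ0
            have h1 : ∀ s, s ≠ s₀ → j s = i s := by
              intro s hs
              obtain ⟨b, hb⟩ := hrest s hs
              rcases hQne _ _ (hQ0 s) with ⟨x1, y, hv, -⟩ | ⟨b1, hv, hw'⟩
              · rw [hb] at hv; simp at hv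
              · have hbb : b1 = b := Sum.inr.inj (hv.symm.trans hb)
                rw [hw', hbb, ← hb]
            have h2' : ∃ y, j s₀ = Sum.inl y := by
              rcases hQne _ _ (hQ0 s₀) with ⟨x1, y, -, hw'⟩ | ⟨b1, hv, -⟩
              · exact ⟨y, hw'⟩
              · rw [hx] at hv; simp at hv
            obtain ⟨y, hy⟩ := h2'
            apply hj
            refine Finset.mem_image.2 ⟨y, Finset.mem_univ _, ?_⟩
            funext s
            rcases eq_or_ne s s₀ with rfl | hs
            · simp only [hf]; rw [Function.update_self, hy]
            · simp only [hf]; rw [Function.update_of_ne hs, h1 s hs]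
        have hsum : ∑ j : Fin k → (Fin t ⊕ Fin t) ⊕ Fin d, AG j * ∏ s, Q (i s) (j s)
            = ∑ y : Fin t ⊕ Fin t, AG (f y) * ∏ s, Q (i s) (f y s) := by
          rw [← Finset.sum_subset (Finset.subset_univ (Finset.image f Finset.univ)) hz]
          rw [Finset.sum_image (fun a _ b _ h => hf_inj a b h)]
        have hprodf : ∀ y, ∏ s, Q (i s) (f y s) = Q (Sum.inl x) (Sum.inl y) := by
          intro y
          rw [Finset.prod_eq_single_of_mem s₀ (Finset.mem_univ _)]
          · simp only [hf]
            rw [Function.update_self, hx]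
          · intro s _ hs
            obtain ⟨b, hb⟩ := hrest s hs
            simp only [hf]
            rw [Function.update_of_ne hs, hb, hQDD, if_pos rfl]
        have hAGf : ∀ y, AG (f y) = if Sum.inl y ∈ N S then w else 0 := by
          intro y
          have hi1 : Function.Injective (f y) := hupd_inj y
          have hi2 : Finset.image (f y) Finset.univ = insert (Sum.inl y) S := himage (Sum.inl y)
          rw [hAG, hi2]
          by_cases hmem : Sum.inl y ∈ N S
          · rw [if_pos ⟨hi1, (hmemG y).2 hmem⟩, if_pos hmem, hwdef]
          · rw [if_neg, if_neg hmem]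
            rintro ⟨-, hg⟩
            exact hmem ((hmemG y).1 hg)
        have hAHi : AH i = if insert (Sum.inl x) S ∈ H then w else 0 := by
          rw [hAH, himage_i]
          by_cases hmem : insert (Sum.inl x) S ∈ H
          · rw [if_pos ⟨hinj, hmem⟩, if_pos hmem, hwdef]
          · rw [if_neg (fun hc => hmem hc.2), if_neg hmem]
        have hHmem : insert (Sum.inl x) S ∈ H ↔
            ((Sum.inl x ∈ N S ∧ ¬ (N S ∩ (C₁ ∪ C₂) = C₁ ∨ N S ∩ (C₁ ∪ C₂) = C₂)) ∨
             (Sum.inl x ∉ N S ∧ (N S ∩ (C₁ ∪ C₂) = C₁ ∨ N S ∩ (C₁ ∪ C₂) = C₂))) := by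
          rw [hH, hSw_iff, hmemG]
        -- counting lemmas
        have hcount1 : ((N S ∩ C₁).card : ℝ)
            = ∑ a : Fin t, (if Sum.inl (Sum.inl a) ∈ N S then (1:ℝ) else 0) := by
          have he : N S ∩ C₁ = Finset.image
              (fun a : Fin t => (Sum.inl (Sum.inl a) : (Fin t ⊕ Fin t) ⊕ Fin d))
              (Finset.univ.filter fun a => Sum.inl (Sum.inl a) ∈ N S) := by
            ext v
            simp only [Finset.mem_inter, Finset.mem_image, Finset.mem_filter, Finset.mem_univ,
              true_and]
            constructor
            · rintro ⟨hv, hc⟩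
              obtain ⟨a, rfl⟩ := (hC1mem v).1 hc
              exact ⟨a, hv, rfl⟩
            · rintro ⟨a, ha, rfl⟩
              exact ⟨ha, (hC1mem _).2 ⟨a, rfl⟩⟩
          rw [he, Finset.card_image_of_injective _ (fun a b hab => by simpa using hab),
            Finset.card_filter]
          push_cast
          rfl
        have hcount2 : ((N S ∩ C₂).card : ℝ)
            = ∑ a : Fin t, (if Sum.inl (Sum.inr a) ∈ N S then (1:ℝ) else 0) := by
          have he : N S ∩ C₂ = Finset.image
              (fun a : Fin t => (Sum.inl (Sum.inr a) : (Fin t ⊕ Fin t) ⊕ Fin d))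
              (Finset.univ.filter fun a => Sum.inl (Sum.inr a) ∈ N S) := by
            ext v
            simp only [Finset.mem_inter, Finset.mem_image, Finset.mem_filter, Finset.mem_univ,
              true_and]
            constructor
            · rintro ⟨hv, hc⟩
              obtain ⟨a, rfl⟩ := (hC2mem v).1 hc
              exact ⟨a, hv, rfl⟩
            · rintro ⟨a, ha, rfl⟩
              exact ⟨ha, (hC2mem _).2 ⟨a, rfl⟩⟩
          rw [he, Finset.card_image_of_injective _ (fun a b hab => by simpa using hab),
            Finset.card_filter]
          push_cast
          rfl
        -- key summation identities
        have key2 : ∀ (p : Fin t → Prop) [DecidablePred p],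
            ∑ a : Fin t, (if p a then w else 0) * (t:ℝ)⁻¹
            = (t:ℝ)⁻¹ * w * ∑ a : Fin t, (if p a then (1:ℝ) else 0) := by
          intro p _
          rw [Finset.mul_sum]
          refine Finset.sum_congr rfl fun a _ => ?_
          by_cases h : p a <;> simp [h] <;> ring
        have key1 : ∀ (p : Fin t → Prop) [DecidablePred p] (a₀ : Fin t),
            ∑ a : Fin t, (if p a then w else 0) * ((if a₀ = a then (1:ℝ) else 0) - (t:ℝ)⁻¹)
            = (if p a₀ then w else 0)
              - (t:ℝ)⁻¹ * w * ∑ a : Fin t, (if p a then (1:ℝ) else 0) := by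
          intro p _ a₀
          have step : ∀ a, (if p a then w else 0) * ((if a₀ = a then (1:ℝ) else 0) - (t:ℝ)⁻¹)
              = (if a₀ = a then (if p a then w else 0) else 0)
                - (if p a then w else 0) * (t:ℝ)⁻¹ := by
            intro a; by_cases h1 : p a <;> by_cases h2 : a₀ = a <;> simp [h1, h2] <;> ring
          rw [Finset.sum_congr rfl fun a _ => step a, Finset.sum_sub_distrib,
            Finset.sum_ite_eq, if_pos (Finset.mem_univ _), key2 p]
        -- put the right-hand side in closed form
        rw [hAHi, hsum,
          Finset.sum_congr rfl fun y (_ : y ∈ Finset.univ) => by rw [hAGf, hprodf],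
          Fintype.sum_sum_type]
        by_cases hswc : N S ∩ (C₁ ∪ C₂) = C₁ ∨ N S ∩ (C₁ ∪ C₂) = C₂
        · rcases hswc with h1 | h1
          · -- N S ∩ (C₁ ∪ C₂) = C₁
            have hA : ∀ a : Fin t, Sum.inl (Sum.inl a) ∈ N S := by
              intro a
              have h' : (Sum.inl (Sum.inl a) : (Fin t ⊕ Fin t) ⊕ Fin d) ∈ C₁ :=
                (hC1mem _).2 ⟨a, rfl⟩
              rw [← h1] at h'
              exact (Finset.mem_inter.1 h').1
            have hB : ∀ a : Fin t, Sum.inl (Sum.inr a) ∉ N S := by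
              intro a ha
              have h' : (Sum.inl (Sum.inr a) : (Fin t ⊕ Fin t) ⊕ Fin d) ∈ N S ∩ (C₁ ∪ C₂) :=
                Finset.mem_inter.2 ⟨ha, hCC _⟩
              rw [h1] at h'
              obtain ⟨a', ha'⟩ := (hC1mem _).1 h'
              simp at ha'
            rcases x with a₀ | a₀
            · -- x ∈ C₁ : switched edge removed
              have hH0 : insert (Sum.inl (Sum.inl a₀)) S ∉ H := by
                rw [hHmem]
                simp [hA a₀, h1]
              rw [if_neg hH0]
              simp only [hQ11, hQ12]
              rw [key1 (fun a => Sum.inl (Sum.inl a) ∈ N S) a₀,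
                key2 (fun a => Sum.inl (Sum.inr a) ∈ N S)]
              simp only [hA, hB, if_true, if_pos, if_neg, not_false_iff]
              simp [Finset.card_univ]
              field_simp; ring
            · -- x ∈ C₂ : switched edge added
              have hH1 : insert (Sum.inl (Sum.inr a₀)) S ∈ H := by
                rw [hHmem]
                exact Or.inr ⟨hB a₀, Or.inl h1⟩
              rw [if_pos hH1]
              simp only [hQ21, hQ22]
              rw [key2 (fun a => Sum.inl (Sum.inl a) ∈ N S),
                key1 (fun a => Sum.inl (Sum.inr a) ∈ N S) a₀]
              simp only [hA, hB, if_true, if_pos, if_neg, not_false_iff]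
              simp [Finset.card_univ]
              field_simp
          · -- N S ∩ (C₁ ∪ C₂) = C₂
            have hA : ∀ a : Fin t, Sum.inl (Sum.inr a) ∈ N S := by
              intro a
              have h' : (Sum.inl (Sum.inr a) : (Fin t ⊕ Fin t) ⊕ Fin d) ∈ C₂ :=
                (hC2mem _).2 ⟨a, rfl⟩
              rw [← h1] at h'
              exact (Finset.mem_inter.1 h').1
            have hB : ∀ a : Fin t, Sum.inl (Sum.inl a) ∉ N S := by
              intro a ha
              have h' : (Sum.inl (Sum.inl a) : (Fin t ⊕ Fin t) ⊕ Fin d) ∈ N S ∩ (C₁ ∪ C₂) :=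
                Finset.mem_inter.2 ⟨ha, hCC _⟩
              rw [h1] at h'
              obtain ⟨a', ha'⟩ := (hC2mem _).1 h'
              simp at ha'
            rcases x with a₀ | a₀
            · -- x ∈ C₁ : switched edge added
              have hH1 : insert (Sum.inl (Sum.inl a₀)) S ∈ H := by
                rw [hHmem]
                exact Or.inr ⟨hB a₀, Or.inr h1⟩
              rw [if_pos hH1]
              simp only [hQ11, hQ12]
              rw [key1 (fun a => Sum.inl (Sum.inl a) ∈ N S) a₀,
                key2 (fun a => Sum.inl (Sum.inr a) ∈ N S)]
              simp only [hA, hB, if_true, if_pos, if_neg, not_false_iff]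
              simp [Finset.card_univ]
              field_simp
            · -- x ∈ C₂ : switched edge removed
              have hH0 : insert (Sum.inl (Sum.inr a₀)) S ∉ H := by
                rw [hHmem]
                simp [hA a₀, h1]
              rw [if_neg hH0]
              simp only [hQ21, hQ22]
              rw [key2 (fun a => Sum.inl (Sum.inl a) ∈ N S),
                key1 (fun a => Sum.inl (Sum.inr a) ∈ N S) a₀]
              simp only [hA, hB, if_true, if_pos, if_neg, not_false_iff]
              simp [Finset.card_univ]
              field_simp; ring
        · -- balanced case : no switching
          have hcards : ((N S ∩ C₁).card : ℝ) = ((N S ∩ C₂).card : ℝ) := by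
            have := (hG2 S hSD hScard).resolve_left (fun h => hswc (Or.inl h))
            have := this.resolve_left (fun h => hswc (Or.inr h))
            exact_mod_cast this
          have hGH : insert (Sum.inl x) S ∈ H ↔ Sum.inl x ∈ N S := by
            rw [hHmem]
            constructor
            · rintro (⟨h', -⟩ | ⟨-, h'⟩)
              · exact h'
              · exact absurd h' hswc
            · intro h'
              exact Or.inl ⟨h', hswc⟩
          have hbal : ∑ a : Fin t, (if Sum.inl (Sum.inl a) ∈ N S then (1:ℝ) else 0)
              = ∑ a : Fin t, (if Sum.inl (Sum.inr a) ∈ N S then (1:ℝ) else 0) := by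
            rw [← hcount1, ← hcount2, hcards]
          rcases x with a₀ | a₀
          · simp only [hQ11, hQ12]
            rw [key1 (fun a => Sum.inl (Sum.inl a) ∈ N S) a₀,
              key2 (fun a => Sum.inl (Sum.inr a) ∈ N S), ← hbal]
            by_cases hmem : Sum.inl (Sum.inl a₀) ∈ N S
            · rw [if_pos (hGH.2 hmem), if_pos hmem]; ring
            · rw [if_neg (fun h => hmem (hGH.1 h)), if_neg hmem]; ring
          · simp only [hQ21, hQ22]
            rw [key2 (fun a => Sum.inl (Sum.inl a) ∈ N S),
              key1 (fun a => Sum.inl (Sum.inr a) ∈ N S) a₀, ← hbal]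
            by_cases hmem : Sum.inl (Sum.inr a₀) ∈ N S
            · rw [if_pos (hGH.2 hmem), if_pos hmem]; ring
            · rw [if_neg (fun h => hmem (hGH.1 h)), if_neg hmem]; ring
    · -- all coordinates of i lie in D
      push_neg at hCex
      have hall : ∀ s, ∃ b, i s = Sum.inr b := by
        intro s; rcases h : i s with y | b
        · exact absurd h (hCex s y)
        · exact ⟨b, rfl⟩
      have hGH : Finset.image i Finset.univ ∈ H ↔ Finset.image i Finset.univ ∈ G := by
        have hnsw : ¬ Sw (Finset.image i Finset.univ) := by
          intro hsw
          obtain ⟨v, hv, S', hS', -, heq, -⟩ := (hSw _).1 hsw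
          obtain ⟨y, rfl⟩ := (hCunion v).1 hv
          have hmem : (Sum.inl y : (Fin t ⊕ Fin t) ⊕ Fin d) ∈ Finset.image i Finset.univ := by
            rw [heq]; exact Finset.mem_insert_self _ _
          obtain ⟨s, -, hs⟩ := Finset.mem_image.1 hmem
          obtain ⟨b, hb⟩ := hall s
          rw [hb] at hs; simp at hs
        rw [hH]; tauto
      have hz : ∀ j ∈ (Finset.univ : Finset (Fin k → (Fin t ⊕ Fin t) ⊕ Fin d)), j ≠ i →
          AG j * ∏ s, Q (i s) (j s) = 0 := by
        intro j _ hj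
        have hex : ∃ s, j s ≠ i s := by
          by_contra hcon; push_neg at hcon; exact hj (funext hcon)
        obtain ⟨s, hs⟩ := hex
        obtain ⟨b, hb⟩ := hall s
        refine mul_eq_zero_of_right _ (Finset.prod_eq_zero (Finset.mem_univ s) ?_)
        by_contra hq
        rcases hQne _ _ hq with ⟨x1, y, hv, -⟩ | ⟨b1, hv, hw⟩
        · rw [hb] at hv; simp at hv
        · have hbb : b1 = b := Sum.inr.inj (hv.symm.trans hb)
          exact hs (by rw [hw, hbb, ← hb])
      have hprod1 : ∏ s, Q (i s) (i s) = 1 := Finset.prod_eq_one fun s _ => by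
        obtain ⟨b, hb⟩ := hall s; rw [hb, hQDD, if_pos rfl]
      rw [Finset.sum_eq_single_of_mem i (Finset.mem_univ i) hz, hprod1, mul_one, hAH, hAG]
      exact if_congr (and_congr_right fun _ => hGH) rfl rfl
  · -- i not injective : both sides vanish
    rw [Function.not_injective_iff] at hinj
    obtain ⟨s, s', hii, hss⟩ := hinj
    rw [hAH, if_neg (fun hc => hss (hc.1 hii))]
    exact (Finset.sum_eq_zero fun j _ => Z2 j s s' hss hii).symm
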